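/- For all real c > 1 and x > e, the inequality (1/(c−1))·(c·(log log(c x))/(log log x) − 1) < 1 + (c/(c−1))·(log c)/(log x · log log x) holds. -/

import Mathlib

open Real Finset

noncomputable section

/-- Sum of divisors of `n`. -/
def sigma1 (n : ℕ) : ℕ := n.divisors.sum id

/-- `n` is superabundant if `σ(n)/n > σ(m)/m` for all positive `m < n`. -/
def Superabundant (n : ℕ) : Prop :=
  0 < n ∧ ∀ m : ℕ, 0 < m → m < n → (sigma1 m : ℝ) / m < (sigma1 n : ℝ) / n

/-- Robin's quotient `f(n) = σ(n)/(n log log n)`. -/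
def robinF (n : ℕ) : ℝ := (sigma1 n : ℝ) / (n * Real.log (Real.log n))

/-- `n` is extremely abundant. -/
def ExtremelyAbundant (n : ℕ) : Prop :=
  n = 10080 ∨ (10080 < n ∧ ∀ m : ℕ, 10080 ≤ m → m < n → robinF m < robinF n)
theorem loglog_cx_inequality (c x : ℝ) (hc : 1 < c) (hx : Real.exp 1 < x) :
    (1 / (c - 1)) * (c * Real.log (Real.log (c * x)) / Real.log (Real.log x) - 1) <
      1 + (c / (c - 1)) * Real.log c / (Real.log x * Real.log (Real.log x)) := by
  have hx0 : (0:ℝ) < x := lt_trans (Real.exp_pos 1) hx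
  have hc0 : (0:ℝ) < c := lt_trans one_pos hc
  set L := Real.log x with hLdef
  have hL1 : 1 < L := by
    rw [hLdef, Real.lt_log_iff_exp_lt hx0]; exact hx
  have hL0 : (0:ℝ) < L := lt_trans one_pos hL1
  have hLL : 0 < Real.log L := Real.log_pos hL1
  set t := Real.log c with htdef
  have ht : 0 < t := Real.log_pos hc
  have hlogcx : Real.log (c * x) = L + t := by
    rw [hLdef, htdef, Real.log_mul (ne_of_gt hc0) (ne_of_gt hx0)]; ring
  have key : Real.log (L + t) < Real.log L + t / L := by
    have h1 : Real.log (L + t) - Real.log L = Real.log ((L + t) / L) := by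
      rw [Real.log_div (by positivity) (ne_of_gt hL0)]
    have h2 : Real.log ((L + t) / L) < (L + t) / L - 1 := by
      apply Real.log_lt_sub_one_of_pos (by positivity)
      intro h
      have : L + t = L := by field_simp at h; linarith
      linarith
    have h3 : (L + t) / L - 1 = t / L := by field_simp; ring
    linarith
  have hc1 : (0:ℝ) < c - 1 := by linarith
  rw [hlogcx]
  have key2 : Real.log (L + t) * L < Real.log L * L + t := by
    have h := mul_lt_mul_of_pos_right key hL0
    have he : (Real.log L + t / L) * L = Real.log L * L + t := by field_simp
    linarith [he ▸ h]
  have h2 : 1 + c / (c - 1) * t / (L * Real.log L) - 1 / (c - 1) * (c * Real.log (L + t) / Real.log L - 1) =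
      (c * (Real.log L * L + t - Real.log (L + t) * L)) / ((c - 1) * (L * Real.log L)) := by
    field_simp
    ring
  have h3 : 0 < (c * (Real.log L * L + t - Real.log (L + t) * L)) / ((c - 1) * (L * Real.log L)) := by
    apply div_pos (by nlinarith) (by positivity)
  linarith [h2 ▸ h3]
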